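/- Let A be an integral k-algebra of finite type over a field k of characteristic zero, B a subalgebra of A, and d_B a k-derivation on B. Then there exist a nonzero element a ∈ A and a k-derivation d_A on A such that d_A restricted to B equals a·d_B. -/

import Mathlib

universe u

/-- Any extension of fields of characteristic zero is formally smooth. -/
theorem formallySmooth_of_charZero_aux (F K : Type u) [Field F] [Field K] [Algebra F K]
    [CharZero F] : Algebra.FormallySmooth F K := by
  obtain ⟨ι, x, hx⟩ := exists_isTranscendenceBasis' (R := F) (A := K)
  haveI : Algebra.IsAlgebraic (IntermediateField.adjoin F (Set.range x)) K := hx.isAlgebraic_field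
  haveI : CharZero (IntermediateField.adjoin F (Set.range x)) :=
    charZero_of_injective_algebraMap
      (algebraMap F (IntermediateField.adjoin F (Set.range x))).injective
  haveI : Algebra.IsIntegral (IntermediateField.adjoin F (Set.range x)) K :=
    Algebra.IsAlgebraic.isIntegral
  haveI : Algebra.IsSeparable (IntermediateField.adjoin F (Set.range x)) K :=
    Algebra.IsSeparable.of_integral _ _
  haveI : Algebra.FormallyEtale (IntermediateField.adjoin F (Set.range x)) K :=
    Algebra.FormallyEtale.of_isSeparable _ _
  haveI : Algebra.FormallySmooth (MvPolynomial ι F) (FractionRing (MvPolynomial ι F)) :=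
    Algebra.FormallySmooth.of_isLocalization (nonZeroDivisors _)
  haveI : Algebra.FormallySmooth F (FractionRing (MvPolynomial ι F)) :=
    Algebra.FormallySmooth.comp F (MvPolynomial ι F) _
  haveI : Algebra.FormallySmooth F (IntermediateField.adjoin F (Set.range x)) :=
    Algebra.FormallySmooth.of_equiv hx.1.aevalEquivField
  exact Algebra.FormallySmooth.comp F (IntermediateField.adjoin F (Set.range x)) K

set_option maxHeartbeats 1000000 in
set_option synthInstance.maxHeartbeats 400000 in
/-- A k-derivation on a subalgebra B of an integral finite-type k-algebra A
(char k = 0) can, after multiplication by a suitable nonzero a ∈ A, be extended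
to a k-derivation on A. -/
theorem extend_derivation_up_to_factor
    (k A : Type*) [Field k] [CharZero k] [CommRing A] [IsDomain A] [Algebra k A]
    [Algebra.FiniteType k A] (B : Subalgebra k A) (dB : Derivation k B B) :
    ∃ (a : A) (dA : Derivation k A A), a ≠ 0 ∧
      ∀ b : B, dA (b : A) = a * ((dB b : B) : A) := by
  classical
  set K := FractionRing A with hK
  have hφ : Function.Injective (algebraMap A K) := IsFractionRing.injective A K
  have hCZA : CharZero A := charZero_of_injective_algebraMap (algebraMap k A).injective
  have hCZK : CharZero K := charZero_of_injective_algebraMap hφ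
  -- `F` is the fraction field of `B`, mapping to `K`.
  have hBK : Function.Injective (algebraMap (↥B) K) := by
    rw [IsScalarTower.algebraMap_eq (↥B) A K]
    exact hφ.comp Subtype.val_injective
  letI : Algebra (FractionRing (↥B)) K := (IsFractionRing.lift (A := ↥B) hBK).toAlgebra
  haveI : IsScalarTower (↥B) (FractionRing (↥B)) K := IsScalarTower.of_algebraMap_eq fun b =>
    (IsFractionRing.lift_algebraMap (K := FractionRing (↥B)) (L := K) hBK b).symm
  haveI : CharZero (FractionRing (↥B)) :=
    RingHom.charZero_iff (algebraMap (FractionRing (↥B)) K).injective |>.mpr hCZK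
  -- `K` is formally smooth over `B`.
  haveI : Algebra.FormallySmooth (↥B) (FractionRing (↥B)) :=
    Algebra.FormallySmooth.of_isLocalization (nonZeroDivisors (↥B))
  haveI : Algebra.FormallySmooth (FractionRing (↥B)) K :=
    formallySmooth_of_charZero_aux (FractionRing (↥B)) K
  haveI : Algebra.FormallySmooth (↥B) K :=
    Algebra.FormallySmooth.comp (↥B) (FractionRing (↥B)) K
  -- The square-zero extension `T = K[ε]` as a `B`-algebra via `b ↦ (b, dB b)`.
  have fstmul : ∀ u v : TrivSqZeroExt K K, (u * v).fst = u.fst * v.fst := fun _ _ => rfl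
  have sndmul : ∀ u v : TrivSqZeroExt K K, (u * v).snd = u.fst * v.snd + u.snd * v.fst :=
    fun _ _ => rfl
  let σ : ↥B →+* TrivSqZeroExt K K :=
    { toFun := fun b => ⟨algebraMap (↥B) K b, algebraMap (↥B) K (dB b)⟩
      map_one' := TrivSqZeroExt.ext (by simp) (by simp)
      map_mul' := fun a b => by
        refine TrivSqZeroExt.ext
          (by exact map_mul (algebraMap (↥B) K) a b) ?_
        show algebraMap (↥B) K (dB (a * b)) =
          algebraMap (↥B) K a * algebraMap (↥B) K (dB b) +
            algebraMap (↥B) K (dB a) * algebraMap (↥B) K b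
        rw [Derivation.leibniz, smul_eq_mul, smul_eq_mul, map_add, map_mul, map_mul]
        ring
      map_zero' := TrivSqZeroExt.ext (by simp) (by simp)
      map_add' := fun a b => TrivSqZeroExt.ext (by exact map_add (algebraMap (↥B) K) a b)
        (by show algebraMap (↥B) K (dB (a + b)) = algebraMap (↥B) K (dB a) + algebraMap (↥B) K (dB b); simp) }
  letI : Algebra (↥B) (TrivSqZeroExt K K) := σ.toAlgebra
  -- The first projection is a `B`-algebra hom.
  let g : TrivSqZeroExt K K →ₐ[↥B] K :=
    { toFun := TrivSqZeroExt.fst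
      map_one' := rfl
      map_mul' := fun a b => TrivSqZeroExt.fst_mul a b
      map_zero' := rfl
      map_add' := fun a b => rfl
      commutes' := fun b => rfl }
  have hgsurj : Function.Surjective g := fun x => ⟨⟨x, 0⟩, rfl⟩
  have hgker : IsNilpotent (RingHom.ker (g : TrivSqZeroExt K K →+* K)) := by
    refine ⟨2, ?_⟩
    rw [pow_two (RingHom.ker (g : TrivSqZeroExt K K →+* K)), Ideal.zero_eq_bot, eq_bot_iff]
    rintro z hz
    rw [Ideal.mem_bot]
    refine Submodule.mul_induction_on hz (fun a ha b hb => ?_)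
      (fun x y hx hy => by rw [hx, hy, add_zero])
    have ha' : a.fst = 0 := ha
    have hb' : b.fst = 0 := hb
    refine TrivSqZeroExt.ext ?_ ?_
    · rw [TrivSqZeroExt.fst_mul, ha', zero_mul, TrivSqZeroExt.fst_zero]
    · rw [sndmul, ha', hb']
      simp
  -- Lift the identity to get a map `L : K → K[ε]` over `B`.
  let L : K →ₐ[↥B] TrivSqZeroExt K K :=
    Algebra.FormallySmooth.liftOfSurjective (AlgHom.id (↥B) K) g hgsurj hgker
  have hL : ∀ x : K, (L x).fst = x := fun x =>
    Algebra.FormallySmooth.liftOfSurjective_apply (AlgHom.id (↥B) K) g hgsurj hgker x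
  have hLB : ∀ b : ↥B, L (algebraMap (↥B) K b) = σ b := fun b => L.commutes b
  -- The second component of `L` is a `k`-derivation on `K` extending `dB`.
  have hLk : ∀ c : k, L (algebraMap k K c) =
      ⟨algebraMap k K c, 0⟩ := by
    intro c
    rw [IsScalarTower.algebraMap_apply k (↥B) K, hLB]
    refine TrivSqZeroExt.ext ?_ ?_
    · show algebraMap (↥B) K (algebraMap k (↥B) c) = algebraMap k K c
      rw [← IsScalarTower.algebraMap_apply]
    · show algebraMap (↥B) K (dB (algebraMap k (↥B) c)) = 0
      rw [Derivation.map_algebraMap, map_zero]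
  let D : Derivation k K K :=
    { toFun := fun x => (L x).snd
      map_add' := fun x y => by
        show (L (x + y)).snd = (L x).snd + (L y).snd
        rw [map_add]
        rfl
      map_smul' := fun c x => by
        show (L (c • x)).snd = c • (L x).snd
        rw [Algebra.smul_def, map_mul, sndmul, hLk]
        show algebraMap k K c * (L x).snd + 0 * (L x).fst = c • (L x).snd
        rw [zero_mul, add_zero, ← Algebra.smul_def]
      map_one_eq_zero' := by
        show (L 1).snd = 0
        rw [map_one]
        rfl
      leibniz' := fun x y => by
        show (L (x * y)).snd = x • (L y).snd + y • (L x).snd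
        rw [map_mul, sndmul, hL, hL, smul_eq_mul, smul_eq_mul]
        ring }
  have hD : ∀ b : ↥B, D (algebraMap A K (b : A)) = algebraMap A K ((dB b : ↥B) : A) := by
    intro b
    have h1 : algebraMap A K (b : A) = algebraMap (↥B) K b :=
      (IsScalarTower.algebraMap_apply (↥B) A K b).symm
    show (L (algebraMap A K (b : A))).snd = _
    rw [h1, hLB b]
    show algebraMap (↥B) K (dB b) = _
    rw [IsScalarTower.algebraMap_apply (↥B) A K]
    rfl
  -- Clear denominators on a finite generating set of `A`.
  obtain ⟨s, hs⟩ := (inferInstance : Algebra.FiniteType k A).out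
  obtain ⟨a₀, ha₀⟩ := IsLocalization.exist_integer_multiples_of_finset (nonZeroDivisors A)
    (s.image fun x => D (algebraMap A K x))
  let C : Subalgebra k A :=
    { carrier := {x : A |
        IsLocalization.IsInteger A (algebraMap A K (a₀ : A) * D (algebraMap A K x))}
      one_mem' := by
        show IsLocalization.IsInteger A (algebraMap A K (a₀ : A) * D (algebraMap A K 1))
        rw [map_one, Derivation.map_one_eq_zero, mul_zero]
        exact IsLocalization.isInteger_zero
      zero_mem' := by
        show IsLocalization.IsInteger A (algebraMap A K (a₀ : A) * D (algebraMap A K 0))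
        rw [map_zero, Derivation.map_zero, mul_zero]
        exact IsLocalization.isInteger_zero
      add_mem' := fun {x y} hx hy => by
        show IsLocalization.IsInteger A (algebraMap A K (a₀ : A) * D (algebraMap A K (x + y)))
        rw [map_add, Derivation.map_add, mul_add]
        exact IsLocalization.isInteger_add hx hy
      mul_mem' := fun {x y} hx hy => by
        show IsLocalization.IsInteger A (algebraMap A K (a₀ : A) * D (algebraMap A K (x * y)))
        rw [map_mul, Derivation.leibniz, smul_eq_mul, smul_eq_mul, mul_add]
        have e1 : algebraMap A K (a₀ : A) * (algebraMap A K x * D (algebraMap A K y)) =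
            x • (algebraMap A K (a₀ : A) * D (algebraMap A K y)) := by
          rw [Algebra.smul_def]; ring
        have e2 : algebraMap A K (a₀ : A) * (algebraMap A K y * D (algebraMap A K x)) =
            y • (algebraMap A K (a₀ : A) * D (algebraMap A K x)) := by
          rw [Algebra.smul_def]; ring
        rw [e1, e2]
        exact IsLocalization.isInteger_add (IsLocalization.isInteger_smul hy)
          (IsLocalization.isInteger_smul hx)
      algebraMap_mem' := fun c => by
        show IsLocalization.IsInteger A
          (algebraMap A K (a₀ : A) * D (algebraMap A K (algebraMap k A c)))
        rw [← IsScalarTower.algebraMap_apply k A K, Derivation.map_algebraMap, mul_zero]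
        exact IsLocalization.isInteger_zero }
  have htop : ∀ x : A, IsLocalization.IsInteger A
      (algebraMap A K (a₀ : A) * D (algebraMap A K x)) := by
    have hle : Algebra.adjoin k (s : Set A) ≤ C := by
      refine Algebra.adjoin_le ?_
      intro x hx
      have h1 := ha₀ (D (algebraMap A K x)) (Finset.mem_image_of_mem _ hx)
      have h2 : IsLocalization.IsInteger A ((a₀ : A) • D (algebraMap A K x)) := h1
      rwa [Algebra.smul_def] at h2
    rw [hs] at hle
    exact fun x => hle (Algebra.mem_top)
  have hex : ∀ x : A, ∃ y : A,
      algebraMap A K y = algebraMap A K (a₀ : A) * D (algebraMap A K x) := fun x => htop x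
  let f : A → A := fun x => (hex x).choose
  have hf : ∀ x : A, algebraMap A K (f x) = algebraMap A K (a₀ : A) * D (algebraMap A K x) :=
    fun x => (hex x).choose_spec
  let dA : Derivation k A A :=
    { toFun := f
      map_add' := fun x y => by
        show f (x + y) = f x + f y
        apply hφ
        rw [map_add, hf, hf, hf, map_add, Derivation.map_add, mul_add]
      map_smul' := fun c x => by
        show f (c • x) = c • f x
        apply hφ
        rw [hf]
        have h1 : algebraMap A K (c • x) = c • algebraMap A K x :=
          map_smul (IsScalarTower.toAlgHom k A K) c x
        have h2 : algebraMap A K (c • f x) = c • algebraMap A K (f x) :=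
          map_smul (IsScalarTower.toAlgHom k A K) c (f x)
        rw [h1, Derivation.map_smul, h2, hf, mul_smul_comm]
      map_one_eq_zero' := by
        apply hφ
        show algebraMap A K (f 1) = algebraMap A K 0
        rw [hf, map_one, Derivation.map_one_eq_zero, mul_zero, map_zero]
      leibniz' := fun x y => by
        apply hφ
        show algebraMap A K (f (x * y)) = algebraMap A K (x • f y + y • f x)
        rw [hf, map_mul, Derivation.leibniz]
        simp only [smul_eq_mul, map_add, map_mul, hf]
        ring }
  exact ⟨(a₀ : A), dA, nonZeroDivisors.coe_ne_zero a₀, fun b => by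
    apply hφ
    show algebraMap A K (f (b : A)) = algebraMap A K ((a₀ : A) * ((dB b : ↥B) : A))
    rw [hf, hD, map_mul]⟩
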